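/- Let N ≥ 1, let D ⊆ GL₂(ℤ/Nℤ) be a subgroup, set Γ_D = {γ ∈ SL₂(ℤ) : γ mod N ∈ D} and T_D(n) = {A ∈ M₂(ℤ) : A mod N ∈ D, det A = n} for n coprime to N with T_D(n) nonempty. Then the map Γ_D·α ↦ SL₂(ℤ)·α gives a bijection between the left coset space Γ_D \ T_D(n) and the left coset space SL₂(ℤ) \ T(n), where T(n) = {A ∈ M₂(ℤ) : det A = n}. -/

import Mathlib

open Matrix

section auxiliary

lemma key_coprime (N : ℕ) (c d : ℤ) (hc : c ≠ 0)
    (h : ∀ p : ℕ, p.Prime → (p:ℤ) ∣ c → (p:ℤ) ∣ d → ¬ ((p:ℤ) ∣ (N:ℤ))) :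
    ∃ r : ℤ, IsCoprime c (d + N * r) := by
  classical
  set r : ℤ := ((c.natAbs.primeFactors.filter fun p : ℕ => ¬ ((p:ℤ) ∣ d)).prod fun p => (p:ℤ)) with hr
  refine ⟨r, ?_⟩
  rw [Int.isCoprime_iff_gcd_eq_one]
  by_contra hg
  obtain ⟨p, hp, hpdvd⟩ := Nat.exists_prime_and_dvd hg
  have hpc : (p:ℤ) ∣ c := dvd_trans (Int.natCast_dvd_natCast.mpr hpdvd) (Int.gcd_dvd_left _ _)
  have hpd' : (p:ℤ) ∣ d + N * r := dvd_trans (Int.natCast_dvd_natCast.mpr hpdvd) (Int.gcd_dvd_right _ _)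
  by_cases hpd : (p:ℤ) ∣ d
  · have hpNr : (p:ℤ) ∣ (N:ℤ) * r := by
      have := dvd_sub hpd' hpd
      simpa using this
    have hprime : Prime (p:ℤ) := Nat.prime_iff_prime_int.mp hp
    rcases hprime.dvd_mul.mp hpNr with hN | hrr
    · exact h p hp hpc hpd hN
    · obtain ⟨q, hq, hpq⟩ := hprime.exists_mem_finset_dvd hrr
      simp only [Finset.mem_filter, Nat.mem_primeFactors] at hq
      have : p = q := (Nat.prime_dvd_prime_iff_eq hp hq.1.1).mp (Int.natCast_dvd_natCast.mp hpq)
      exact hq.2 (this ▸ hpd)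
  · have hmem : p ∈ (c.natAbs.primeFactors.filter fun p : ℕ => ¬ ((p:ℤ) ∣ d)) := by
      simp only [Finset.mem_filter, Nat.mem_primeFactors]
      exact ⟨⟨hp, by rwa [← Int.natAbs_dvd_natAbs, Int.natAbs_natCast] at hpc,
        by simpa using hc⟩, hpd⟩
    have hpr : (p:ℤ) ∣ r := Finset.dvd_prod_of_mem _ hmem
    have : (p:ℤ) ∣ d := by
      have := dvd_sub hpd' (hpr.mul_left (N:ℤ))
      simpa using this
    exact hpd this

lemma SL2_lift (N : ℕ) (hN : 1 ≤ N) (M : Matrix (Fin 2) (Fin 2) (ZMod N)) (hM : M.det = 1) :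
    ∃ γ : Matrix.SpecialLinearGroup (Fin 2) ℤ,
      (γ : Matrix (Fin 2) (Fin 2) ℤ).map (fun a : ℤ => (a : ZMod N)) = M := by
  obtain ⟨a, ha⟩ := ZMod.intCast_surjective (M 0 0)
  obtain ⟨b, hb⟩ := ZMod.intCast_surjective (M 0 1)
  obtain ⟨c, hcM⟩ := ZMod.intCast_surjective (M 1 0)
  obtain ⟨d, hd⟩ := ZMod.intCast_surjective (M 1 1)
  have hdet : M 0 0 * M 1 1 - M 0 1 * M 1 0 = 1 := by rw [← Matrix.det_fin_two]; exact hM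
  have hNdvd : (N:ℤ) ∣ a * d - b * c - 1 := by
    rw [← ZMod.intCast_zmod_eq_zero_iff_dvd]
    push_cast
    rw [ha, hb, hcM, hd]
    linear_combination hdet
  set c' : ℤ := if c = 0 then (N:ℤ) else c with hc'def
  have hc'cast : ((c' : ℤ) : ZMod N) = M 1 0 := by
    by_cases h0 : c = 0
    · simp [hc'def, h0, ← hcM]
    · simp [hc'def, h0, hcM]
  have hc'ne : c' ≠ 0 := by
    by_cases h0 : c = 0
    · simp [hc'def, h0]; omega
    · simp [hc'def, h0]
  have hkey : ∀ p : ℕ, p.Prime → (p:ℤ) ∣ c' → (p:ℤ) ∣ d → ¬ ((p:ℤ) ∣ (N:ℤ)) := by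
    intro p hp hpc' hpd hpN
    have hpc : (p:ℤ) ∣ c := by
      by_cases h0 : c = 0
      · simp [h0]
      · rwa [hc'def, if_neg h0] at hpc'
    have h1 : (p:ℤ) ∣ 1 := by
      have h2 : (p:ℤ) ∣ a * d - b * c := dvd_sub (hpd.mul_left a) (hpc.mul_left b)
      have h3 : (p:ℤ) ∣ a * d - b * c - 1 := hpN.trans hNdvd
      have := dvd_sub h2 h3
      simpa using this
    have := Int.le_of_dvd one_pos h1
    have := hp.two_le
    omega
  obtain ⟨r, hcop⟩ := key_coprime N c' d hc'ne hkey
  set d' : ℤ := d + N * r with hd'def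
  have hd'cast : ((d' : ℤ) : ZMod N) = M 1 1 := by
    push_cast [hd'def]
    simp [hd, ZMod.natCast_self]
  obtain ⟨u, v, huv⟩ := hcop
  obtain ⟨t, ht⟩ := ZMod.intCast_surjective (M 0 1 * (v:ZMod N) + M 0 0 * (u:ZMod N))
  have hGdet : (!![v + t * c', -u + t * d'; c', d'] : Matrix (Fin 2) (Fin 2) ℤ).det = 1 := by
    rw [Matrix.det_fin_two_of]; linear_combination huv
  refine ⟨⟨!![v + t * c', -u + t * d'; c', d'], hGdet⟩, ?_⟩
  have he1 : (v : ZMod N) * M 1 1 + (u : ZMod N) * M 1 0 = 1 := by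
    have := congrArg (fun z : ℤ => (z : ZMod N)) huv
    push_cast at this
    rw [hc'cast, hd'cast] at this
    linear_combination this
  show Matrix.map !![v + t * c', -u + t * d'; c', d'] (fun a : ℤ => (a : ZMod N)) = M
  ext i j
  fin_cases i <;> fin_cases j <;> simp only [Matrix.map_apply, Matrix.cons_val_zero,
    Matrix.cons_val_one, Matrix.head_cons, Matrix.cons_val', Matrix.empty_val',
    Matrix.cons_val_fin_one, Matrix.head_fin_const, Matrix.of_apply, Fin.isValue,
    Fin.zero_eta, Fin.mk_one]
  · push_cast
    rw [ht, hc'cast]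
    linear_combination (M 0 0) * he1 - (v : ZMod N) * hdet
  · push_cast
    rw [ht, hd'cast]
    linear_combination (M 0 1) * he1 + (u : ZMod N) * hdet
  · exact hc'cast
  · exact hd'cast

lemma matmap_mul (N : ℕ) (A B : Matrix (Fin 2) (Fin 2) ℤ) :
    (A * B).map (fun a : ℤ => (a : ZMod N)) =
      A.map (fun a : ℤ => (a : ZMod N)) * B.map (fun a : ℤ => (a : ZMod N)) :=
  Matrix.map_mul (f := Int.castRingHom (ZMod N))

lemma matmap_det (N : ℕ) (B : Matrix (Fin 2) (Fin 2) ℤ) :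
    (B.map (fun a : ℤ => (a : ZMod N))).det = ((B.det : ℤ) : ZMod N) :=
  (RingHom.map_det (Int.castRingHom (ZMod N)) B).symm

end auxiliary

/-- An integer matrix reduces mod `N` into the subgroup `D ⊆ GL₂(ℤ/Nℤ)`. -/
def ReducesInto (N : ℕ) (D : Subgroup (GL (Fin 2) (ZMod N)))
    (A : Matrix (Fin 2) (Fin 2) ℤ) : Prop :=
  ∃ g ∈ D, (g : Matrix (Fin 2) (Fin 2) (ZMod N)) = A.map (fun a : ℤ => (a : ZMod N))

theorem stmt_18 (N : ℕ) (hN : 1 ≤ N) (n : ℤ) (hn : Int.gcd n N = 1)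
    (D : Subgroup (GL (Fin 2) (ZMod N)))
    (hne : ∃ A : Matrix (Fin 2) (Fin 2) ℤ, ReducesInto N D A ∧ A.det = n) :
    ∃ f : Quot (fun A B : {M : Matrix (Fin 2) (Fin 2) ℤ // ReducesInto N D M ∧ M.det = n} =>
          ∃ γ : Matrix.SpecialLinearGroup (Fin 2) ℤ,
            ReducesInto N D (γ : Matrix (Fin 2) (Fin 2) ℤ) ∧
            (γ : Matrix (Fin 2) (Fin 2) ℤ) * A.1 = B.1) →
        Quot (fun A B : {M : Matrix (Fin 2) (Fin 2) ℤ // M.det = n} =>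
          ∃ γ : Matrix.SpecialLinearGroup (Fin 2) ℤ,
            (γ : Matrix (Fin 2) (Fin 2) ℤ) * A.1 = B.1),
      Function.Bijective f ∧
      ∀ A : {M : Matrix (Fin 2) (Fin 2) ℤ // ReducesInto N D M ∧ M.det = n},
        f (Quot.mk _ A) = Quot.mk _ ⟨A.1, A.2.2⟩ := by
  classical
  set r₂ := (fun A B : {M : Matrix (Fin 2) (Fin 2) ℤ // M.det = n} =>
          ∃ γ : Matrix.SpecialLinearGroup (Fin 2) ℤ,
            (γ : Matrix (Fin 2) (Fin 2) ℤ) * A.1 = B.1) with hr₂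
  -- unit of the determinant mod N
  have hunit : IsUnit ((n : ℤ) : ZMod N) := by
    have hcop : IsCoprime (n : ℤ) ((N : ℕ) : ℤ) := Int.isCoprime_iff_gcd_eq_one.mpr hn
    have := hcop.map (Int.castRingHom (ZMod N))
    rw [isCoprime_comm] at this
    apply isCoprime_zero_left.mp
    convert this using 2
    all_goals simp
  -- the key injectivity step: an SL₂(ℤ) element carrying one element of T_D(n) to another
  -- reduces into D
  have hred : ∀ (A B : Matrix (Fin 2) (Fin 2) ℤ) (γ : Matrix.SpecialLinearGroup (Fin 2) ℤ),
      ReducesInto N D A → ReducesInto N D B →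
      (γ : Matrix (Fin 2) (Fin 2) ℤ) * A = B → ReducesInto N D (γ : Matrix (Fin 2) (Fin 2) ℤ) := by
    intro A B γ ⟨gA, hgAD, hgA⟩ ⟨gB, hgBD, hgB⟩ hmul
    refine ⟨gB * gA⁻¹, D.mul_mem hgBD (D.inv_mem hgAD), ?_⟩
    have hcast := congrArg (fun X : Matrix (Fin 2) (Fin 2) ℤ =>
      X.map (fun a : ℤ => (a : ZMod N))) hmul
    simp only [matmap_mul] at hcast
    rw [← hgA, ← hgB] at hcast
    have : (gB : Matrix (Fin 2) (Fin 2) (ZMod N)) * ((gA⁻¹ : GL (Fin 2) (ZMod N)) :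
        Matrix (Fin 2) (Fin 2) (ZMod N)) =
        ((γ : Matrix (Fin 2) (Fin 2) ℤ).map (fun a : ℤ => (a : ZMod N)) *
          (gA : Matrix (Fin 2) (Fin 2) (ZMod N))) *
          ((gA⁻¹ : GL (Fin 2) (ZMod N)) : Matrix (Fin 2) (Fin 2) (ZMod N)) := by
      rw [hcast]
    rw [Units.val_mul]
    rw [this, mul_assoc, ← Units.val_mul, mul_inv_cancel, Units.val_one, mul_one]
  refine ⟨Quot.lift (fun A => Quot.mk r₂ ⟨A.1, A.2.2⟩)
      (fun A B h => Quot.sound (by obtain ⟨γ, _, hγ⟩ := h; exact ⟨γ, hγ⟩)), ⟨?_, ?_⟩,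
      fun A => rfl⟩
  · -- injective
    intro q₁ q₂ h
    induction q₁ using Quot.ind with | _ A =>
    induction q₂ using Quot.ind with | _ B =>
    have h' : Quot.mk r₂ ⟨A.1, A.2.2⟩ = Quot.mk r₂ ⟨B.1, B.2.2⟩ := h
    have hEq := Quot.eqvGen_exact h'
    have hgen : ∀ x y : {M : Matrix (Fin 2) (Fin 2) ℤ // M.det = n},
        Relation.EqvGen r₂ x y → ∃ γ : Matrix.SpecialLinearGroup (Fin 2) ℤ,
          (γ : Matrix (Fin 2) (Fin 2) ℤ) * x.1 = y.1 := by
      intro x y hxy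
      induction hxy with
      | rel x y h => exact h
      | refl x => exact ⟨1, by simp⟩
      | symm x y _ ih =>
        obtain ⟨γ, hγ⟩ := ih
        refine ⟨γ⁻¹, ?_⟩
        rw [← hγ, ← mul_assoc, ← Matrix.SpecialLinearGroup.coe_mul, inv_mul_cancel,
          Matrix.SpecialLinearGroup.coe_one, one_mul]
      | trans x y z _ _ ih₁ ih₂ =>
        obtain ⟨γ₁, hγ₁⟩ := ih₁
        obtain ⟨γ₂, hγ₂⟩ := ih₂
        refine ⟨γ₂ * γ₁, ?_⟩
        rw [Matrix.SpecialLinearGroup.coe_mul, mul_assoc, hγ₁, hγ₂]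
    obtain ⟨γ, hγ⟩ := hgen _ _ hEq
    exact Quot.sound ⟨γ, hred A.1 B.1 γ A.2.1 B.2.1 hγ, hγ⟩
  · -- surjective
    intro q
    induction q using Quot.ind with | _ B =>
    obtain ⟨A₀, ⟨g₀, hg₀D, hg₀⟩, hdetA₀⟩ := hne
    -- B mod N is invertible
    have hdetB : (B.1.map (fun a : ℤ => (a : ZMod N))).det = ((n : ℤ) : ZMod N) := by
      rw [matmap_det, B.2]
    have hBunit : IsUnit (B.1.map (fun a : ℤ => (a : ZMod N))) := by
      rw [Matrix.isUnit_iff_isUnit_det, hdetB]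
      exact hunit
    obtain ⟨uB, huB⟩ := hBunit
    obtain ⟨w, hw⟩ := hunit
    -- the target of the lift
    have hsdet : ((g₀ : Matrix (Fin 2) (Fin 2) (ZMod N)) * ((uB⁻¹ : (Matrix (Fin 2) (Fin 2)
        (ZMod N))ˣ) : Matrix (Fin 2) (Fin 2) (ZMod N))).det = 1 := by
      have hd1 : ((g₀ : Matrix (Fin 2) (Fin 2) (ZMod N)) *
          ((uB⁻¹ : (Matrix (Fin 2) (Fin 2) (ZMod N))ˣ) : Matrix (Fin 2) (Fin 2) (ZMod N)) *
          (uB : Matrix (Fin 2) (Fin 2) (ZMod N))).det = ((n : ℤ) : ZMod N) := by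
        rw [mul_assoc, ← Units.val_mul, inv_mul_cancel, Units.val_one, mul_one, hg₀,
          matmap_det, hdetA₀]
      rw [Matrix.det_mul, huB, hdetB, ← hw] at hd1
      have h2 := congrArg (fun z : ZMod N => z * ((w⁻¹ : (ZMod N)ˣ) : ZMod N)) hd1
      simp only [mul_assoc, ← Units.val_mul, mul_inv_cancel, Units.val_one, mul_one] at h2
      exact h2
    obtain ⟨γ, hγ⟩ := SL2_lift N hN _ hsdet
    have hdetA : ((γ : Matrix (Fin 2) (Fin 2) ℤ) * B.1).det = n := by
      rw [Matrix.det_mul, Matrix.SpecialLinearGroup.det_coe, one_mul, B.2]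
    have hAred : ReducesInto N D ((γ : Matrix (Fin 2) (Fin 2) ℤ) * B.1) := by
      refine ⟨g₀, hg₀D, ?_⟩
      rw [matmap_mul, hγ, mul_assoc, ← huB, ← Units.val_mul, inv_mul_cancel, Units.val_one,
        mul_one]
    refine ⟨Quot.mk _ ⟨(γ : Matrix (Fin 2) (Fin 2) ℤ) * B.1, hAred, hdetA⟩, ?_⟩
    show Quot.mk r₂ ⟨(γ : Matrix (Fin 2) (Fin 2) ℤ) * B.1, hdetA⟩ = Quot.mk r₂ ⟨B.1, B.2⟩
    refine Quot.sound ⟨γ⁻¹, ?_⟩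
    show (↑γ⁻¹ : Matrix (Fin 2) (Fin 2) ℤ) * ((γ : Matrix (Fin 2) (Fin 2) ℤ) * B.1) = B.1
    rw [← mul_assoc, ← Matrix.SpecialLinearGroup.coe_mul, inv_mul_cancel,
      Matrix.SpecialLinearGroup.coe_one, one_mul]
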